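/- On the open set Ω = {(t,x) ∈ ℝ² : t ≠ 0 and cos(x) ≠ 0}, the function v(t,x) = 2·arctan(coth(t)·tan(x)) satisfies v_x(t,x) ≠ 0 and solves the potential fast diffusion equation v_t = v_xx / v_x on Ω. -/

import Mathlib

/-- Partial derivative with respect to the first variable (time). -/
noncomputable def pt (u : ℝ × ℝ → ℝ) (p : ℝ × ℝ) : ℝ :=
  deriv (fun s => u (s, p.2)) p.1

/-- Partial derivative with respect to the second variable (space). -/
noncomputable def px (u : ℝ × ℝ → ℝ) (p : ℝ × ℝ) : ℝ :=
  deriv (fun y => u (p.1, y)) p.2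

/-- The potential `v = 2 arctan(coth(t)·tan(x))` of the non-Lie exact solution 6') solves
the potential fast diffusion equation `v_t = v_xx / v_x` with `v_x ≠ 0` on
`{t ≠ 0, cos x ≠ 0}`. -/
theorem potential_fast_diffusion_solution_arctan
    (v : ℝ × ℝ → ℝ)
    (hv : v = fun p =>
      2 * Real.arctan ((Real.cosh p.1 / Real.sinh p.1) * Real.tan p.2))
    (Ω : Set (ℝ × ℝ)) (hΩ : Ω = {p : ℝ × ℝ | p.1 ≠ 0 ∧ Real.cos p.2 ≠ 0}) :
    ∀ p ∈ Ω, px v p ≠ 0 ∧ pt v p = px (px v) p / px v p := by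
  rintro ⟨t, x⟩ hp
  rw [hΩ] at hp
  obtain ⟨ht, hcx⟩ := hp
  have hs : Real.sinh t ≠ 0 := Real.sinh_ne_zero.mpr ht
  set c : ℝ := Real.cosh t / Real.sinh t with hc_def
  have hc : c ≠ 0 := div_ne_zero (ne_of_gt (Real.cosh_pos t)) hs
  have hD : ∀ y : ℝ, 0 < Real.cos y ^ 2 + c ^ 2 * Real.sin y ^ 2 := by
    intro y
    rcases eq_or_ne (Real.cos y) 0 with h | h
    · have h1 : Real.sin y ^ 2 = 1 := by
        have := Real.sin_sq_add_cos_sq y; nlinarith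
      rw [h, h1]
      have : 0 < c ^ 2 := by positivity
      nlinarith
    · positivity
  -- the first space derivative
  have hpx : ∀ y : ℝ, Real.cos y ≠ 0 →
      px v (t, y) = 2 * c / (Real.cos y ^ 2 + c ^ 2 * Real.sin y ^ 2) := by
    intro y hy
    have h1 : HasDerivAt (fun y' => v (t, y'))
        (2 * (1 / (1 + (c * Real.tan y) ^ 2) * (c * (1 / Real.cos y ^ 2)))) y := by
      rw [hv]
      simp only [← hc_def]
      exact (((Real.hasDerivAt_tan hy).const_mul c).arctan).const_mul 2
    rw [px, h1.deriv]
    have h2 : (0:ℝ) < 1 + (c * Real.tan y) ^ 2 := by positivity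
    rw [Real.tan_eq_sin_div_cos] at *
    field_simp
  -- the second space derivative
  have hDc : HasDerivAt (fun y => Real.cos y ^ 2 + c ^ 2 * Real.sin y ^ 2)
      (2 * Real.cos x * (-Real.sin x) + c ^ 2 * (2 * Real.sin x * Real.cos x)) x := by
    have h1 := (Real.hasDerivAt_cos x).fun_pow 2
    have h2 := ((Real.hasDerivAt_sin x).fun_pow 2).const_mul (c ^ 2)
    refine (h1.add h2).congr_deriv ?_
    push_cast
    ring
  have hg : HasDerivAt (fun y => 2 * c / (Real.cos y ^ 2 + c ^ 2 * Real.sin y ^ 2))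
      (-((2 * c) * (2 * Real.cos x * (-Real.sin x) + c ^ 2 * (2 * Real.sin x * Real.cos x))) /
        (Real.cos x ^ 2 + c ^ 2 * Real.sin x ^ 2) ^ 2) x := by
    have h := (hasDerivAt_const x (2 * c)).fun_div hDc (ne_of_gt (hD x))
    refine h.congr_deriv ?_
    ring
  have hppx : px (px v) (t, x) =
      -((2 * c) * (2 * Real.cos x * (-Real.sin x) + c ^ 2 * (2 * Real.sin x * Real.cos x))) /
        (Real.cos x ^ 2 + c ^ 2 * Real.sin x ^ 2) ^ 2 := by
    rw [px]
    have hev : (fun y => px v (t, y)) =ᶠ[nhds x]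
        (fun y => 2 * c / (Real.cos y ^ 2 + c ^ 2 * Real.sin y ^ 2)) := by
      filter_upwards [Real.continuous_cos.continuousAt.eventually_ne hcx] with y hy
      exact hpx y hy
    rw [Filter.EventuallyEq.deriv_eq hev]
    exact hg.deriv
  -- the time derivative
  have hptv : pt v (t, x) = 2 * (1 / (1 + (c * Real.tan x) ^ 2) *
      ((Real.sinh t * Real.sinh t - Real.cosh t * Real.cosh t) / Real.sinh t ^ 2 *
        Real.tan x)) := by
    rw [pt, hv]
    have h1 : HasDerivAt (fun s => Real.cosh s / Real.sinh s)
        ((Real.sinh t * Real.sinh t - Real.cosh t * Real.cosh t) / Real.sinh t ^ 2) t :=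
      (Real.hasDerivAt_cosh t).div (Real.hasDerivAt_sinh t) hs
    exact (((h1.mul_const (Real.tan x)).arctan).const_mul 2).deriv
  -- conclude
  have hpxv := hpx x hcx
  have hDx := hD x
  refine ⟨?_, ?_⟩
  · rw [hpxv]
    exact div_ne_zero (by simpa using hc) (ne_of_gt hDx)
  · rw [hptv, hppx, hpxv, hc_def] at *
    have h2 : (0:ℝ) < 1 + (Real.cosh t / Real.sinh t * Real.tan x) ^ 2 := by positivity
    rw [Real.tan_eq_sin_div_cos] at *
    field_simp
    ring
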